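/- Let 0 < D ≤ 1 and set o_1 = (0,1), o_2 = (0,−1) ∈ ℝ². For x ∈ ℝ² with x ≠ o_1 and x ≠ o_2, define U(x) = { u ∈ ℝ² : −⟨(x−o_i)/‖x−o_i‖, u⟩ ≤ (‖x−o_i‖² − D²)/(2‖x−o_i‖) for i = 1,2 }. Then for every t ∈ ℝ with (t,0) in the domain, the set U((t,0)) is nonempty, closed and convex, there is a unique minimizer ρ_c((t,0)) of ‖u − (1,0)‖ over U((t,0)), and ρ_c((t,0)) = ( (D² − t² − 1)/(2t), 0 ) if t ∈ (−D−1, D−1), while ρ_c((t,0)) = (1,0) if t ∉ (−D−1, D−1). -/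

import Mathlib

open scoped RealInnerProductSpace

noncomputable def vec2 (x y : ℝ) : EuclideanSpace ℝ (Fin 2) :=
  (WithLp.equiv 2 (Fin 2 → ℝ)).symm ![x, y]

lemma vec2_sub (a b c d : ℝ) : vec2 a b - vec2 c d = vec2 (a-c) (b-d) := by
  ext i; fin_cases i <;> simp [vec2]

lemma vec2_app0 (a b : ℝ) : vec2 a b 0 = a := rfl
lemma vec2_app1 (a b : ℝ) : vec2 a b 1 = b := rfl

lemma inner_vec2 (a b : ℝ) (u : EuclideanSpace ℝ (Fin 2)) :
    ⟪vec2 a b, u⟫ = a * u 0 + b * u 1 := by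
  simp [vec2, PiLp.inner_apply, Fin.sum_univ_two]
  ring

lemma normsq_sub_vec2 (u : EuclideanSpace ℝ (Fin 2)) (a b : ℝ) :
    ‖u - vec2 a b‖ ^ 2 = (u 0 - a)^2 + (u 1 - b)^2 := by
  rw [← real_inner_self_eq_norm_sq, PiLp.inner_apply]
  simp [vec2, Fin.sum_univ_two]

lemma norm_vec2_sq (a b : ℝ) : ‖vec2 a b‖ ^ 2 = a^2 + b^2 := by
  rw [← real_inner_self_eq_norm_sq, inner_vec2]
  simp [vec2]; ring

lemma norm_le_norm_of_sq (a b : EuclideanSpace ℝ (Fin 2)) (h : ‖a‖^2 ≤ ‖b‖^2) :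
    ‖a‖ ≤ ‖b‖ := by
  nlinarith [norm_nonneg a, norm_nonneg b]

lemma memU_iff (D t : ℝ) (u : EuclideanSpace ℝ (Fin 2)) :
    (-⟪(‖vec2 t 0 - vec2 0 1‖)⁻¹ • (vec2 t 0 - vec2 0 1), u⟫ ≤
        (‖vec2 t 0 - vec2 0 1‖ ^ 2 - D ^ 2) / (2 * ‖vec2 t 0 - vec2 0 1‖) ∧
     -⟪(‖vec2 t 0 - vec2 0 (-1)‖)⁻¹ • (vec2 t 0 - vec2 0 (-1)), u⟫ ≤
        (‖vec2 t 0 - vec2 0 (-1)‖ ^ 2 - D ^ 2) / (2 * ‖vec2 t 0 - vec2 0 (-1)‖))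
    ↔ (u 1 - t * u 0 ≤ (t^2 + 1 - D^2)/2 ∧ -(u 1) - t * u 0 ≤ (t^2 + 1 - D^2)/2) := by
  have hsub1 : vec2 t 0 - vec2 0 1 = vec2 t (-1) := by rw [vec2_sub]; norm_num
  have hsub2 : vec2 t 0 - vec2 0 (-1) = vec2 t 1 := by rw [vec2_sub]; norm_num
  rw [hsub1, hsub2]
  have hn2a : ‖vec2 t (-1)‖ ^ 2 = t^2 + 1 := by rw [norm_vec2_sq]; ring
  have hn2b : ‖vec2 t 1‖ ^ 2 = t^2 + 1 := by rw [norm_vec2_sq]; ring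
  have hn0a : 0 < ‖vec2 t (-1)‖ := by nlinarith [norm_nonneg (vec2 t (-1))]
  have hn0b : 0 < ‖vec2 t 1‖ := by nlinarith [norm_nonneg (vec2 t 1)]
  have key : ∀ m A B : ℝ, 0 < m → (-(m⁻¹ * A) ≤ B/(2*m) ↔ -A ≤ B/2) := by
    intro m A B hm
    rw [show -(m⁻¹ * A) = -A * m⁻¹ by ring,
        show B/(2*m) = B/2 * m⁻¹ by field_simp,
        mul_le_mul_iff_of_pos_right (inv_pos.mpr hm)]
  rw [real_inner_smul_left, real_inner_smul_left, inner_vec2, inner_vec2,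
      key _ _ _ hn0a, key _ _ _ hn0b, hn2a, hn2b]
  constructor <;> (rintro ⟨a, b⟩; constructor <;> linarith)

theorem stmt17 (D : ℝ) (hD0 : 0 < D) (hD1 : D ≤ 1) :
    ∀ t : ℝ, vec2 t 0 ≠ vec2 0 1 → vec2 t 0 ≠ vec2 0 (-1) →
      (let o₁ : EuclideanSpace ℝ (Fin 2) := vec2 0 1
       let o₂ : EuclideanSpace ℝ (Fin 2) := vec2 0 (-1)
       let x : EuclideanSpace ℝ (Fin 2) := vec2 t 0
       let U : Set (EuclideanSpace ℝ (Fin 2)) :=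
         {u | -⟪(‖x - o₁‖)⁻¹ • (x - o₁), u⟫ ≤ (‖x - o₁‖ ^ 2 - D ^ 2) / (2 * ‖x - o₁‖) ∧
              -⟪(‖x - o₂‖)⁻¹ • (x - o₂), u⟫ ≤ (‖x - o₂‖ ^ 2 - D ^ 2) / (2 * ‖x - o₂‖)}
       U.Nonempty ∧ IsClosed U ∧ Convex ℝ U ∧
         ∃ ρ : EuclideanSpace ℝ (Fin 2),
           (ρ ∈ U ∧ ∀ u ∈ U, ‖ρ - vec2 1 0‖ ≤ ‖u - vec2 1 0‖) ∧
           (∀ ρ' : EuclideanSpace ℝ (Fin 2),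
             (ρ' ∈ U ∧ ∀ u ∈ U, ‖ρ' - vec2 1 0‖ ≤ ‖u - vec2 1 0‖) → ρ' = ρ) ∧
           ρ = if -D - 1 < t ∧ t < D - 1 then
                 vec2 ((D ^ 2 - t ^ 2 - 1) / (2 * t)) 0
               else vec2 1 0) := by
  intro t ht1 ht2
  dsimp only
  set U : Set (EuclideanSpace ℝ (Fin 2)) :=
    {u | -⟪(‖vec2 t 0 - vec2 0 1‖)⁻¹ • (vec2 t 0 - vec2 0 1), u⟫ ≤
          (‖vec2 t 0 - vec2 0 1‖ ^ 2 - D ^ 2) / (2 * ‖vec2 t 0 - vec2 0 1‖) ∧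
         -⟪(‖vec2 t 0 - vec2 0 (-1)‖)⁻¹ • (vec2 t 0 - vec2 0 (-1)), u⟫ ≤
          (‖vec2 t 0 - vec2 0 (-1)‖ ^ 2 - D ^ 2) / (2 * ‖vec2 t 0 - vec2 0 (-1)‖)} with hU
  have hmem : ∀ u : EuclideanSpace ℝ (Fin 2), u ∈ U ↔
      (u 1 - t * u 0 ≤ (t^2 + 1 - D^2)/2 ∧ -(u 1) - t * u 0 ≤ (t^2 + 1 - D^2)/2) := by
    intro u; rw [hU, Set.mem_setOf_eq]; exact memU_iff D t u
  refine ⟨?_, ?_, ?_, ?_⟩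
  · -- Nonempty
    refine ⟨0, (hmem 0).mpr ⟨?_, ?_⟩⟩ <;> · simp; nlinarith
  · -- Closed
    rw [hU, Set.setOf_and]
    refine IsClosed.inter ?_ ?_ <;>
      exact isClosed_le (Continuous.neg (Continuous.inner continuous_const continuous_id))
        continuous_const
  · -- Convex
    rw [hU, Set.setOf_and]
    refine Convex.inter ?_ ?_ <;>
    · refine convex_halfSpace_le ⟨fun a b => ?_, fun c a => ?_⟩ _
      · rw [inner_add_right]; ring
      · rw [real_inner_smul_right, smul_eq_mul]; ring
  · by_cases hc : -D - 1 < t ∧ t < D - 1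
    · -- inside the interval
      obtain ⟨hcl, hcr⟩ := hc
      have ht0 : t < 0 := by linarith
      have h2t : 2 * t < 0 := by linarith
      set r : ℝ := (D ^ 2 - t ^ 2 - 1) / (2 * t) with hr
      have hr1 : r ≤ 1 := by
        rw [hr, div_le_iff_of_neg h2t]; nlinarith
      have hrc : -t * r = (t^2 + 1 - D^2)/2 := by
        rw [hr]; field_simp [ne_of_lt ht0]; ring
      have hρU : vec2 r 0 ∈ U := by
        rw [hmem]
        rw [vec2_app0, vec2_app1]
        constructor <;> simp <;> linarith [hrc.le, hrc.ge]
      have hu0 : ∀ u ∈ U, u 0 ≤ r := by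
        intro u hu
        obtain ⟨a, b⟩ := (hmem u).mp hu
        rw [hr, le_div_iff_of_neg h2t]
        nlinarith
      have hmin : ∀ u ∈ U, ‖vec2 r 0 - vec2 1 0‖ ≤ ‖u - vec2 1 0‖ := by
        intro u hu
        refine norm_le_norm_of_sq _ _ ?_
        rw [normsq_sub_vec2, normsq_sub_vec2, vec2_app0, vec2_app1]
        have h0 := hu0 u hu
        nlinarith [sq_nonneg (u 1 - 0),
          mul_nonneg (by linarith : (0:ℝ) ≤ r - u 0) (by linarith : (0:ℝ) ≤ 2 - r - u 0)]
      refine ⟨vec2 r 0, ⟨hρU, hmin⟩, ?_, by rw [if_pos ⟨hcl, hcr⟩]⟩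
      intro ρ' ⟨hρ'U, hρ'min⟩
      have e1 : ‖ρ' - vec2 1 0‖ ≤ ‖vec2 r 0 - vec2 1 0‖ := hρ'min _ hρU
      have e2 : ‖vec2 r 0 - vec2 1 0‖ ≤ ‖ρ' - vec2 1 0‖ := hmin _ hρ'U
      have e3 : ‖ρ' - vec2 1 0‖ ^ 2 = ‖vec2 r 0 - vec2 1 0‖ ^ 2 := by
        rw [le_antisymm e1 e2]
      rw [normsq_sub_vec2, normsq_sub_vec2, vec2_app0, vec2_app1] at e3
      have h0 := hu0 _ hρ'U
      have h5 : ρ' 1 = 0 := by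
        have : (ρ' 1)^2 ≤ 0 := by
          nlinarith [mul_nonneg (by linarith : (0:ℝ) ≤ r - ρ' 0)
            (by linarith : (0:ℝ) ≤ 2 - r - ρ' 0)]
        nlinarith [sq_nonneg (ρ' 1)]
      have h6 : ρ' 0 = r := by
        have hge : r ≤ ρ' 0 := by nlinarith
        linarith [h0, hge]
      ext i; fin_cases i
      · simpa [vec2_app0] using h6
      · simpa [vec2_app1] using h5
    · -- outside the interval
      have hfeas : vec2 1 0 ∈ U := by
        rw [hmem, vec2_app0, vec2_app1]
        push_neg at hc
        rcases le_or_gt t (-D - 1) with h | h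
        · constructor <;>
          · nlinarith [mul_nonneg (by linarith : (0:ℝ) ≤ -(t+1+D))
              (by linarith : (0:ℝ) ≤ -(t+1-D))]
        · have h' : D - 1 ≤ t := hc h
          constructor <;>
          · nlinarith [mul_nonneg (by linarith : (0:ℝ) ≤ t+1-D)
              (by linarith : (0:ℝ) ≤ t+1+D)]
      have hz : ‖vec2 1 0 - vec2 1 0‖ = 0 := by rw [sub_self, norm_zero]
      refine ⟨vec2 1 0, ⟨hfeas, fun u _ => by rw [hz]; exact norm_nonneg _⟩, ?_,
        by rw [if_neg hc]⟩
      intro ρ' ⟨hρ'U, hρ'min⟩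
      have := hρ'min _ hfeas
      rw [hz] at this
      have : ρ' - vec2 1 0 = 0 := by
        rw [← norm_le_zero_iff]; exact this
      exact sub_eq_zero.mp this
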